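/- Let q be a power of an odd prime p, let 𝔽_q be the finite field with q elements, let K be an algebraic closure of 𝔽_q, and let σ : K → K be the Frobenius map σ(x) = x^q. For every positive integer n, the number a of n-element subsets S ⊆ K \ {0} with σ(S) = S satisfies (q+1) · a = (q−1) · (q^n − (−1)^n). -/

import Mathlib

open Polynomial

set_option linter.unusedSectionVars false
namespace Stmt7

/-- ncard of a product of sets. -/
lemma ncard_sprod {α β : Type*} (s : Set α) (t : Set β) :
    (s ×ˢ t).ncard = s.ncard * t.ncard := by
  rw [← Nat.card_coe_set_eq, ← Nat.card_coe_set_eq, ← Nat.card_coe_set_eq,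
    Nat.card_congr (Equiv.Set.prod s t), Nat.card_prod]

lemma ncard_biUnion {α : Type*} (s : Finset ℕ) (f : ℕ → Set α)
    (hf : ∀ i ∈ s, (f i).Finite)
    (hd : ∀ i ∈ s, ∀ j ∈ s, i ≠ j → Disjoint (f i) (f j)) :
    (⋃ i ∈ s, f i).ncard = ∑ i ∈ s, (f i).ncard := by
  induction s using Finset.induction_on with
  | empty => simp
  | @insert a s ha ih =>
    rw [Finset.sum_insert ha, Finset.set_biUnion_insert,
      Set.ncard_union_eq ?dis ?f1 ?f2,
      ih (fun i hi => hf i (Finset.mem_insert_of_mem hi))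
        (fun i hi j hj hij =>
          hd i (Finset.mem_insert_of_mem hi) j (Finset.mem_insert_of_mem hj) hij)]
    case dis =>
      rw [Set.disjoint_iUnion₂_right]
      exact fun i hi => hd a (Finset.mem_insert_self a s) i (Finset.mem_insert_of_mem hi)
        (by rintro rfl; exact ha hi)
    case f1 => exact hf a (Finset.mem_insert_self a s)
    case f2 =>
      exact Set.Finite.biUnion s.finite_toSet
        (fun i hi => hf i (Finset.mem_insert_of_mem hi))

variable (K : Type*) [Field K] [DecidableEq K]

/-- σ-stable multisets of size `n` avoiding `0`. -/
def MS (q n : ℕ) : Set (Multiset K) :=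
  {T | Multiset.card T = n ∧ (0 : K) ∉ T ∧ T.map (fun x => x ^ q) = T}

/-- σ-stable *sets* (nodup multisets) of size `n` avoiding `0`. -/
def AS (q n : ℕ) : Set (Multiset K) := {T | T ∈ MS K q n ∧ T.Nodup}

lemma MS_zero (q : ℕ) : MS K q 0 = {(0 : Multiset K)} := by
  ext T
  simp only [MS, Set.mem_setOf_eq, Set.mem_singleton_iff, Multiset.card_eq_zero]
  constructor
  · rintro ⟨rfl, -, -⟩; rfl
  · rintro rfl; simp

lemma AS_zero (q : ℕ) : AS K q 0 = {(0 : Multiset K)} := by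
  ext T
  simp only [AS, Set.mem_setOf_eq, MS_zero, Set.mem_singleton_iff]
  constructor
  · rintro ⟨rfl, -⟩; rfl
  · rintro rfl; simp


section Poly

variable {F : Type*} [Field F] [Fintype F] [Algebra F K] [IsAlgClosed K] {q : ℕ}

lemma bij_poly (hF : Fintype.card F = q)
    (hfix : ∀ x : K, x ^ q = x → x ∈ Set.range (algebraMap F K))
    (φ : K →+* K) (hφ : ∀ x, φ x = x ^ q) {n : ℕ} :
    Set.BijOn (fun f : F[X] => (f.map (algebraMap F K)).roots)
      {f : F[X] | f.Monic ∧ f.natDegree = n ∧ f.coeff 0 ≠ 0} (MS K q n) := by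
  have hinj : Function.Injective (algebraMap F K) := (algebraMap F K).injective
  have halg : ∀ a : F, φ (algebraMap F K a) = algebraMap F K a := by
    intro a
    rw [hφ, ← map_pow]
    congr 1
    calc a ^ q = a ^ Fintype.card F := by rw [hF]
    _ = a := FiniteField.pow_card a
  have hcomp : φ.comp (algebraMap F K) = algebraMap F K := RingHom.ext halg
  have hfun : (fun x : K => x ^ q) = ⇑φ := funext fun x => (hφ x).symm
  refine ⟨?_, ?_, ?_⟩
  · rintro f ⟨hm, hdeg, hc0⟩
    set P := f.map (algebraMap F K) with hP
    have hPm : P.Monic := hm.map _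
    have hsp : Splits P :=
      IsAlgClosed.splits P
    refine ⟨?_, ?_, ?_⟩
    · rw [(splits_iff_card_roots).mp hsp, hP, natDegree_map_eq_of_injective hinj, hdeg]
    · intro h0
      have := isRoot_of_mem_roots h0
      rw [IsRoot, ← coeff_zero_eq_eval_zero, coeff_map] at this
      exact hc0 (hinj (by simpa using this))
    · have hmapφ : P.map φ = P := by rw [hP, map_map, hcomp]
      rw [hfun, ← hsp.roots_map φ, hmapφ]
  · rintro f ⟨hfm, hfdeg, -⟩ g ⟨hgm, hgdeg, -⟩ h
    have hspf : Splits (f.map (algebraMap F K)) :=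
      IsAlgClosed.splits _
    have hspg : Splits (g.map (algebraMap F K)) :=
      IsAlgClosed.splits _
    apply map_injective (algebraMap F K) hinj
    rw [hspf.eq_prod_roots_of_monic (hfm.map _),
      hspg.eq_prod_roots_of_monic (hgm.map _)]
    simp only at h
    rw [h]
  · rintro T ⟨hcard, h0T, hstab⟩
    set P : K[X] := (T.map fun a => X - C a).prod with hPdef
    have hPm : P.Monic := monic_multiset_prod_of_monic _ _ fun a _ => monic_X_sub_C a
    have hroots : P.roots = T := roots_multiset_prod_X_sub_C T
    have hPφ : P.map φ = P := by
      rw [hPdef, Polynomial.map_multiset_prod, Multiset.map_map]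
      have : ((Polynomial.map φ) ∘ fun a : K => X - C a)
          = (fun a => X - C a) ∘ (fun x : K => x ^ q) := by
        funext a
        simp [Polynomial.map_sub, hφ]
      rw [this, ← Multiset.map_map, hstab]
    have hcoeffs : ∀ m, P.coeff m ∈ Set.range (algebraMap F K) := by
      intro m
      apply hfix
      rw [← hφ]
      conv_rhs => rw [← hPφ]
      rw [coeff_map]
    obtain ⟨f, hfmap⟩ := (mem_lifts P).mp ((lifts_iff_coeff_lifts P).mpr hcoeffs)
    have hPe0 : P.coeff 0 ≠ 0 := by
      rw [coeff_zero_eq_eval_zero, hPdef, eval_multiset_prod, Multiset.map_map]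
      apply Multiset.prod_ne_zero
      intro h0
      rw [Multiset.mem_map] at h0
      obtain ⟨a, haT, ha⟩ := h0
      simp only [Function.comp_apply, eval_sub, eval_X, eval_C, zero_sub, neg_eq_zero] at ha
      exact h0T (ha ▸ haT)
    refine ⟨f, ⟨?_, ?_, ?_⟩, show (f.map (algebraMap F K)).roots = T by rw [hfmap, hroots]⟩
    · exact (hinj.monic_map_iff).mpr (hfmap ▸ hPm)
    · rw [← natDegree_map_eq_of_injective hinj, hfmap, ← hcard, hPdef,
        natDegree_multiset_prod_of_monic _ (fun g hg => by
          rw [Multiset.mem_map] at hg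
          obtain ⟨a, -, rfl⟩ := hg
          exact monic_X_sub_C a)]
      simp [Multiset.map_map, natDegree_X_sub_C, Multiset.map_const', Multiset.sum_replicate]
    · intro h
      apply hPe0
      rw [← hfmap, coeff_map, h, map_zero]


/-- The explicit equivalence used to count coefficient vectors. -/
def vecEquiv (F : Type*) [Field F] (m : ℕ) :
    {v : Fin (m + 2) → F // v (Fin.last (m + 1)) = 1 ∧ v 0 ≠ 0} ≃
      {x : F // x ≠ 0} × (Fin m → F) where
  toFun v := (⟨v.1 0, v.2.2⟩, fun i => v.1 (Fin.succ (Fin.castSucc i)))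
  invFun xw := ⟨Fin.cons xw.1.1 (Fin.snoc xw.2 1), by
      constructor
      · show Fin.cons _ _ (Fin.last (m+1)) = 1
        rw [← Fin.succ_last, Fin.cons_succ, Fin.snoc_last]
      · show Fin.cons _ _ (0 : Fin (m+2)) ≠ 0
        rw [Fin.cons_zero]
        exact xw.1.2⟩
  left_inv v := by
    apply Subtype.ext
    funext j
    dsimp only
    induction j using Fin.cases with
    | zero => simp
    | succ k =>
      rw [Fin.cons_succ]
      induction k using Fin.lastCases with
      | last => rw [Fin.snoc_last, Fin.succ_last]; exact v.2.1.symm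
      | cast i => rw [Fin.snoc_castSucc]
  right_inv xw := by
    refine Prod.ext (Subtype.ext ?_) (funext fun i => ?_) <;> dsimp only
    · show Fin.cons _ _ (0 : Fin (m+2)) = _
      rw [Fin.cons_zero]
    · show Fin.cons _ _ _ = _
      rw [Fin.cons_succ, Fin.snoc_castSucc]

lemma ncard_vecSet {m : ℕ} (hF : Fintype.card F = q) :
    ({v : Fin (m + 2) → F | v (Fin.last (m + 1)) = 1 ∧ v 0 ≠ 0}).ncard
      = (q - 1) * q ^ m := by
  classical
  rw [Set.ncard_eq_toFinset_card', Set.toFinset_card]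
  calc Fintype.card {v : Fin (m + 2) → F // v (Fin.last (m + 1)) = 1 ∧ v 0 ≠ 0}
      = Fintype.card ({x : F // x ≠ 0} × (Fin m → F)) := Fintype.card_congr (vecEquiv F m)
    _ = (q - 1) * q ^ m := by
        rw [Fintype.card_prod, Fintype.card_fun, Fintype.card_subtype_compl,
          Fintype.card_subtype_eq (0 : F), hF, Fintype.card_fin]

lemma ncard_polyset (hF : Fintype.card F = q) {n : ℕ} (hn : 0 < n) :
    {f : F[X] | f.Monic ∧ f.natDegree = n ∧ f.coeff 0 ≠ 0}.Finite ∧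
      {f : F[X] | f.Monic ∧ f.natDegree = n ∧ f.coeff 0 ≠ 0}.ncard = (q - 1) * q ^ (n - 1) := by
  classical
  set PS := {f : F[X] | f.Monic ∧ f.natDegree = n ∧ f.coeff 0 ≠ 0} with hPS
  set V : Set (Fin (n+1) → F) := {v | v (Fin.last n) = 1 ∧ v 0 ≠ 0} with hV
  have hbij : Set.BijOn (fun (f : F[X]) (i : Fin (n+1)) => f.coeff i) PS V := by
    refine ⟨?_, ?_, ?_⟩
    · rintro f ⟨hm, hdeg, hc0⟩
      constructor
      · show f.coeff (Fin.last n : Fin (n+1)) = 1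
        have : ((Fin.last n : Fin (n+1)) : ℕ) = n := rfl
        rw [this, ← hdeg]
        exact hm.coeff_natDegree
      · show f.coeff ((0 : Fin (n+1)) : ℕ) ≠ 0
        simpa using hc0
    · rintro f ⟨hfm, hfdeg, -⟩ g ⟨hgm, hgdeg, -⟩ h
      ext m
      rcases le_or_gt m n with hm | hm
      · have := congrFun h ⟨m, by omega⟩
        simpa using this
      · rw [coeff_eq_zero_of_natDegree_lt (hfdeg ▸ hm),
          coeff_eq_zero_of_natDegree_lt (hgdeg ▸ hm)]
    · rintro v ⟨hvl, hv0⟩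
      set f : F[X] := ∑ i : Fin (n+1), C (v i) * X ^ (i : ℕ) with hf
      have hc : ∀ m : ℕ, f.coeff m = if h : m < n + 1 then v ⟨m, h⟩ else 0 := by
        intro m
        rw [hf, finset_sum_coeff]
        simp only [coeff_C_mul, coeff_X_pow, mul_ite, mul_one, mul_zero]
        by_cases h : m < n + 1
        · rw [dif_pos h, Finset.sum_eq_single (⟨m, h⟩ : Fin (n+1))]
          · simp
          · intro b _ hb
            rw [if_neg (by rintro rfl; exact hb rfl)]
          · intro habs
            exact absurd (Finset.mem_univ _) habs
        · rw [dif_neg h, Finset.sum_eq_zero]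
          intro b _
          rw [if_neg (by rintro rfl; exact h b.isLt)]
      have hdegle : f.natDegree ≤ n := by
        apply natDegree_le_iff_coeff_eq_zero.mpr
        intro m hm
        rw [hc m, dif_neg (by omega)]
      have hcn : f.coeff n = 1 := by
        rw [hc n, dif_pos (by omega)]
        exact hvl
      have hmon : f.Monic := monic_of_natDegree_le_of_coeff_eq_one n hdegle hcn
      have hdeg : f.natDegree = n := le_antisymm hdegle (le_natDegree_of_ne_zero (by
        rw [hcn]; exact one_ne_zero))
      refine ⟨f, ⟨hmon, hdeg, ?_⟩, ?_⟩
      · show f.coeff 0 ≠ 0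
        rw [hc 0, dif_pos (by omega)]
        exact hv0
      · funext i
        show f.coeff i = v i
        rw [hc i, dif_pos i.isLt]
  have hVfin : V.Finite := Set.toFinite V
  have hfin : PS.Finite :=
    Set.Finite.of_finite_image (hbij.image_eq ▸ hVfin) hbij.injOn
  refine ⟨hfin, ?_⟩
  rw [← Set.ncard_image_of_injOn hbij.injOn, hbij.image_eq]
  obtain ⟨m, rfl⟩ : ∃ m, n = m + 1 := ⟨n - 1, by omega⟩
  have := ncard_vecSet (F := F) (q := q) (m := m) hF
  simpa using this


lemma MS_card (hF : Fintype.card F = q)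
    (hfix : ∀ x : K, x ^ q = x → x ∈ Set.range (algebraMap F K))
    (φ : K →+* K) (hφ : ∀ x, φ x = x ^ q) {n : ℕ} (hn : 0 < n) :
    (MS K q n).Finite ∧ (MS K q n).ncard = (q - 1) * q ^ (n - 1) := by
  have hbij := bij_poly (K := K) hF hfix φ hφ (n := n)
  obtain ⟨hfin, hcard⟩ := ncard_polyset (q := q) (F := F) hF hn
  constructor
  · rw [← hbij.image_eq]
    exact hfin.image _
  · rw [← hbij.image_eq, Set.ncard_image_of_injOn hbij.injOn, hcard]

lemma MS_fin (hF : Fintype.card F = q)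
    (hfix : ∀ x : K, x ^ q = x → x ∈ Set.range (algebraMap F K))
    (φ : K →+* K) (hφ : ∀ x, φ x = x ^ q) (n : ℕ) : (MS K q n).Finite := by
  rcases Nat.eq_zero_or_pos n with rfl | hn
  · rw [MS_zero]
    exact Set.finite_singleton _
  · exact (MS_card (K := K) hF hfix φ hφ hn).1

lemma AS_fin (hF : Fintype.card F = q)
    (hfix : ∀ x : K, x ^ q = x → x ∈ Set.range (algebraMap F K))
    (φ : K →+* K) (hφ : ∀ x, φ x = x ^ q) (n : ℕ) : (AS K q n).Finite :=
  (MS_fin (K := K) hF hfix φ hφ n).subset fun _ hT => hT.1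


lemma conv_bij {q : ℕ} (hbijσ : Function.Bijective (fun x : K => x ^ q)) (n : ℕ) :
    Set.BijOn (fun SM : Multiset K × Multiset K => SM.1 + (SM.2 + SM.2))
      {SM : Multiset K × Multiset K | SM.1.Nodup ∧ (0:K) ∉ SM.1 ∧
        SM.1.map (fun x => x ^ q) = SM.1 ∧ (0:K) ∉ SM.2 ∧
        SM.2.map (fun x => x ^ q) = SM.2 ∧
        Multiset.card SM.1 + 2 * Multiset.card SM.2 = n} (MS K q n) := by
  obtain ⟨hσinj, hσsurj⟩ := hbijσ
  refine ⟨?_, ?_, ?_⟩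
  · rintro ⟨S, M⟩ ⟨hnd, h0S, hSst, h0M, hMst, hcard⟩
    dsimp only at *
    refine ⟨by simp only [Multiset.card_add]; omega, ?_, ?_⟩
    · simp only [Multiset.mem_add]
      tauto
    · simp only [Multiset.map_add, hSst, hMst]
  · rintro ⟨S, M⟩ ⟨hnd, -, -, -, -, -⟩ ⟨S', M'⟩ ⟨hnd', -, -, -, -, -⟩ heq
    dsimp only at *
    have hc : ∀ x, S.count x + (M.count x + M.count x)
        = S'.count x + (M'.count x + M'.count x) := fun x => by
      have := congrArg (Multiset.count x) heq
      simpa [Multiset.count_add] using this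
    have h1 := Multiset.nodup_iff_count_le_one.mp hnd
    have h1' := Multiset.nodup_iff_count_le_one.mp hnd'
    have hS : S = S' := Multiset.ext.mpr fun x => by
      have := hc x; have := h1 x; have := h1' x; omega
    have hM : M = M' := Multiset.ext.mpr fun x => by
      have := hc x; have := h1 x; have := h1' x; omega
    simp [hS, hM]
  · rintro T ⟨hcard, h0T, hstab⟩
    set σ := fun x : K => x ^ q with hσdef
    have hstab' : ∀ x, T.count (σ x) = T.count x := by
      intro x
      conv_lhs => rw [← hstab]
      exact Multiset.count_map_eq_count' σ T hσinj x
    set S : Finset K := T.toFinset.filter (fun x => Odd (T.count x)) with hSdef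
    set M : Multiset K := ∑ x ∈ T.toFinset, Multiset.replicate (T.count x / 2) x with hMdef
    have hScount : ∀ x, S.val.count x = T.count x % 2 := by
      intro x
      by_cases hx : Odd (T.count x)
      · have hxT : x ∈ T := Multiset.count_pos.mp (by rcases hx with ⟨k, hk⟩; omega)
        have hxS : x ∈ S.val := Finset.mem_val.mpr
          (Finset.mem_filter.mpr ⟨Multiset.mem_toFinset.mpr hxT, hx⟩)
        rw [Multiset.count_eq_one_of_mem S.nodup hxS, Nat.odd_iff.mp hx]
      · have hxS : x ∉ S.val := by
          rw [Finset.mem_val, hSdef, Finset.mem_filter]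
          tauto
        rw [Multiset.count_eq_zero_of_notMem hxS]
        have := Nat.not_odd_iff_even.mp hx
        rw [Nat.even_iff] at this
        omega
    have hMcount : ∀ x, M.count x = T.count x / 2 := by
      intro x
      rw [hMdef, Multiset.count_sum']
      by_cases hx : x ∈ T.toFinset
      · rw [Finset.sum_eq_single x
          (fun b _ hbx => by rw [Multiset.count_replicate, if_neg hbx])
          (fun h => absurd hx h)]
        rw [Multiset.count_replicate, if_pos rfl]
      · rw [Finset.sum_eq_zero (fun b hb => by
          rw [Multiset.count_replicate, if_neg (fun h => hx (by rw [← h]; exact hb))])]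
        have : T.count x = 0 :=
          Multiset.count_eq_zero_of_notMem (fun h => hx (Multiset.mem_toFinset.mpr h))
        omega
    have hPhi : S.val + (M + M) = T := Multiset.ext.mpr fun x => by
      rw [Multiset.count_add, Multiset.count_add, hScount, hMcount]
      omega
    have h0S : (0 : K) ∉ S.val := by
      intro h
      have h0 : T.count 0 = 0 := Multiset.count_eq_zero_of_notMem h0T
      have h1 := hScount 0
      have h2 := Multiset.count_pos.mpr h
      omega
    have h0M : (0 : K) ∉ M := by
      intro h
      have h0 : T.count 0 = 0 := Multiset.count_eq_zero_of_notMem h0T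
      have h1 := hMcount 0
      have h2 := Multiset.count_pos.mpr h
      omega
    have hstabS : S.val.map σ = S.val := Multiset.ext.mpr fun y => by
      obtain ⟨x, rfl⟩ := hσsurj y
      rw [Multiset.count_map_eq_count' σ _ hσinj x, hScount, hScount, hstab']
    have hstabM : M.map σ = M := Multiset.ext.mpr fun y => by
      obtain ⟨x, rfl⟩ := hσsurj y
      rw [Multiset.count_map_eq_count' σ _ hσinj x, hMcount, hMcount, hstab']
    have hcards : Multiset.card S.val + 2 * Multiset.card M = n := by
      have := congrArg Multiset.card hPhi
      simp only [Multiset.card_add] at this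
      omega
    exact ⟨(S.val, M), ⟨S.nodup, h0S, hstabS, h0M, hstabM, hcards⟩, hPhi⟩

lemma conv (hF : Fintype.card F = q)
    (hfix : ∀ x : K, x ^ q = x → x ∈ Set.range (algebraMap F K))
    (φ : K →+* K) (hφ : ∀ x, φ x = x ^ q)
    (hbijσ : Function.Bijective (fun x : K => x ^ q)) (n : ℕ) :
    (MS K q n).ncard = ∑ k ∈ Finset.range (n / 2 + 1),
      (AS K q (n - 2 * k)).ncard * (MS K q k).ncard := by
  classical
  have hbij := conv_bij (K := K) hbijσ n
  have hDu : {SM : Multiset K × Multiset K | SM.1.Nodup ∧ (0:K) ∉ SM.1 ∧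
        SM.1.map (fun x => x ^ q) = SM.1 ∧ (0:K) ∉ SM.2 ∧
        SM.2.map (fun x => x ^ q) = SM.2 ∧
        Multiset.card SM.1 + 2 * Multiset.card SM.2 = n}
      = ⋃ k ∈ Finset.range (n / 2 + 1),
          ((AS K q (n - 2 * k)) ×ˢ (MS K q k) : Set (Multiset K × Multiset K)) := by
    ext ⟨S, M⟩
    simp only [Set.mem_setOf_eq, Set.mem_iUnion, Finset.mem_range, Set.mem_prod]
    constructor
    · rintro ⟨hnd, h0S, hSst, h0M, hMst, hcard⟩
      exact ⟨Multiset.card M, by omega,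
        ⟨⟨by omega, h0S, hSst⟩, hnd⟩, ⟨rfl, h0M, hMst⟩⟩
    · rintro ⟨k, hk, ⟨⟨hcS, h0S, hSst⟩, hnd⟩, hcM, h0M, hMst⟩
      exact ⟨hnd, h0S, hSst, h0M, hMst, by omega⟩
  rw [← hbij.image_eq, Set.ncard_image_of_injOn hbij.injOn, hDu,
    ncard_biUnion _ _ ?fin ?dis]
  · exact Finset.sum_congr rfl fun k hk => ncard_sprod _ _
  case fin =>
    intro k hk
    exact (AS_fin (K := K) hF hfix φ hφ _).prod (MS_fin (K := K) hF hfix φ hφ _)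
  case dis =>
    intro i hi j hj hij
    rw [Set.disjoint_left]
    intro a ha ha'
    exact hij (ha.2.1.symm.trans ha'.2.1)

end Poly

lemma arith (q : ℕ) (hq1 : 1 < q) (a m : ℕ → ℤ)
    (hm0 : m 0 = 1) (ha0 : a 0 = 1)
    (hmk : ∀ k, m (k + 1) = ((q : ℤ) - 1) * (q : ℤ) ^ k)
    (hconv : ∀ N, m N = ∑ k ∈ Finset.range (N / 2 + 1), a (N - 2 * k) * m k) :
    ∀ N, 1 ≤ N → ((q : ℤ) + 1) * a N = ((q : ℤ) - 1) * ((q : ℤ) ^ N - (-1) ^ N) := by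
  have ha1 : a 1 = (q : ℤ) - 1 := by
    have h := hconv 1
    rw [show (1 / 2 + 1) = 1 by norm_num, Finset.sum_range_one, hm0, hmk 0] at h
    simpa using h.symm
  have ha2 : a 2 = ((q : ℤ) - 1) ^ 2 := by
    have h := hconv 2
    rw [show (2 / 2 + 1) = 2 by norm_num, Finset.sum_range_succ, Finset.sum_range_one,
      hmk 1] at h
    norm_num [hm0, ha0, hmk 0] at h
    linear_combination -h
  have hrec : ∀ N, 1 ≤ N → a (N + 2) = a N + ((q : ℤ) - 1) ^ 2 * (q : ℤ) ^ N := by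
    intro N hN
    have h2 := hconv (N + 2)
    have h1 := hconv N
    have hdiv : (N + 2) / 2 + 1 = (N / 2 + 1) + 1 := by omega
    rw [hdiv, Finset.sum_range_succ'] at h2
    have hidx : ∀ k, N + 2 - 2 * (k + 1) = N - 2 * k := fun k => by omega
    have hm' : ∀ k, m (k + 1) = (q : ℤ) * m k - (if k = 0 then 1 else 0) := by
      intro k
      cases k with
      | zero => rw [hmk 0, hm0]; simp
      | succ j => rw [hmk (j + 1), hmk j, if_neg (Nat.succ_ne_zero j)]; ring
    have hsum : ∑ k ∈ Finset.range (N / 2 + 1), a (N + 2 - 2 * (k + 1)) * m (k + 1)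
        = (q : ℤ) * (∑ k ∈ Finset.range (N / 2 + 1), a (N - 2 * k) * m k) - a N := by
      rw [Finset.mul_sum,
        show (a N) = ∑ k ∈ Finset.range (N / 2 + 1), (if k = 0 then a N else 0) by
          rw [Finset.sum_ite_eq' (Finset.range (N / 2 + 1)) 0 (fun _ => a N)]
          simp,
        ← Finset.sum_sub_distrib]
      refine Finset.sum_congr rfl fun k hk => ?_
      rw [hidx k, hm' k]
      by_cases h : k = 0
      · subst h
        simp [hm0]
        ring
      · rw [if_neg h, if_neg h]
        ring
    rw [hsum, ← h1] at h2
    simp only [Nat.mul_zero, Nat.sub_zero, hm0, mul_one] at h2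
    obtain ⟨N', rfl⟩ : ∃ N', N = N' + 1 := ⟨N - 1, by omega⟩
    rw [hmk (N' + 2), hmk N'] at h2
    linear_combination -h2
  intro N
  induction N using Nat.twoStepInduction with
  | zero => intro h; exact absurd h (by omega)
  | one => intro _; rw [ha1]; ring
  | more n IH1 IH2 =>
    intro _
    rcases Nat.eq_zero_or_pos n with rfl | hn
    · show ((q : ℤ) + 1) * a 2 = _
      rw [ha2]
      ring
    · have h := hrec n hn
      have hIH := IH1 hn
      linear_combination ((q : ℤ) + 1) * h + hIH

end Stmt7

open Stmt7 Polynomial in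
/-- Let `q` be a power of an odd prime `p`, `𝔽_q` the field with `q`
elements, `K` an algebraic closure and `σ(x) = x^q` the Frobenius. For every positive
integer `n`, the number `a` of `n`-element subsets `S ⊆ K \ {0}` with `σ(S) = S`
satisfies `(q+1)·a = (q−1)·(q^n − (−1)^n)`. -/
theorem stmt7 (p e q : ℕ) (hp : p.Prime) (hodd : Odd p) (he : 0 < e) (hq : q = p ^ e)
    (F K : Type*) [Field F] [Fintype F] (hF : Fintype.card F = q)
    [Field K] [DecidableEq K] [Algebra F K] [IsAlgClosure F K] (n : ℕ) (hn : 0 < n) :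
    ((q : ℤ) + 1) *
        ({S : Finset K | S.card = n ∧ (0 : K) ∉ S ∧
            S.image (fun x => x ^ q) = S}.ncard : ℤ)
      = ((q : ℤ) - 1) * ((q : ℤ) ^ n - (-1 : ℤ) ^ n) := by
  classical
  haveI := Fact.mk hp
  have hq1 : 1 < q := by
    rw [hq]
    exact Nat.one_lt_pow (by omega) hp.one_lt
  haveI : CharP F (ringChar F) := ringChar.charP F
  obtain ⟨m, hrp, hcard⟩ := FiniteField.card F (ringChar F)
  have hpr : p = ringChar F := by
    have hdvd : p ∣ ringChar F ^ (m : ℕ) := by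
      rw [← hcard, hF, hq]
      exact dvd_pow_self p (by omega)
    exact (Nat.prime_dvd_prime_iff_eq hp hrp).mp (hp.dvd_of_dvd_pow hdvd)
  haveI hchF : CharP F p := by rw [hpr]; exact ringChar.charP F
  haveI : CharP K p := charP_of_injective_algebraMap (algebraMap F K).injective p
  haveI : IsAlgClosed K := IsAlgClosure.isAlgClosed F
  haveI : ExpChar K p := ExpChar.prime hp
  set φ : K →+* K := iterateFrobenius K p e with hφdef
  have hφ : ∀ x : K, φ x = x ^ q := fun x => by
    rw [hφdef, iterateFrobenius_def, hq]
  have hbijσ : Function.Bijective (fun x : K => x ^ q) := by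
    constructor
    · intro x y hxy
      apply φ.injective
      rw [hφ, hφ]
      exact hxy
    · intro y
      obtain ⟨z, hz⟩ := IsAlgClosed.exists_pow_nat_eq y (n := q) (by omega)
      exact ⟨z, hz⟩
  have hfix : ∀ x : K, x ^ q = x → x ∈ Set.range (algebraMap F K) := by
    intro x hx
    have hPne : (X ^ q - X : K[X]) ≠ 0 := FiniteField.X_pow_card_sub_X_ne_zero K hq1
    have hdeg : (X ^ q - X : K[X]).natDegree = q :=
      FiniteField.X_pow_card_sub_X_natDegree_eq K hq1
    have hxr : x ∈ (X ^ q - X : K[X]).roots := by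
      rw [mem_roots hPne]
      simp [IsRoot, sub_eq_zero, hx]
    set E : Finset K := Finset.univ.image (algebraMap F K) with hE
    have hEsub : E ⊆ (X ^ q - X : K[X]).roots.toFinset := by
      intro y hy
      rw [hE, Finset.mem_image] at hy
      obtain ⟨a, -, rfl⟩ := hy
      rw [Multiset.mem_toFinset, mem_roots hPne]
      simp only [IsRoot, eval_sub, eval_pow, eval_X, sub_eq_zero]
      rw [← map_pow]
      congr 1
      calc a ^ q = a ^ Fintype.card F := by rw [hF]
        _ = a := FiniteField.pow_card a
    have hcardE : E.card = q := by
      rw [hE, Finset.card_image_of_injective _ (algebraMap F K).injective,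
        Finset.card_univ, hF]
    have hle : (X ^ q - X : K[X]).roots.toFinset.card ≤ q := by
      calc (X ^ q - X : K[X]).roots.toFinset.card
          ≤ Multiset.card (X ^ q - X : K[X]).roots := Multiset.toFinset_card_le _
        _ ≤ (X ^ q - X : K[X]).natDegree := card_roots' _
        _ = q := hdeg
    have hEq : E = (X ^ q - X : K[X]).roots.toFinset :=
      Finset.eq_of_subset_of_card_le hEsub (by rw [hcardE]; exact hle)
    have hxE : x ∈ E := by rw [hEq, Multiset.mem_toFinset]; exact hxr
    rw [hE, Finset.mem_image] at hxE
    obtain ⟨a, -, rfl⟩ := hxE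
    exact ⟨a, rfl⟩
  have hsetimg : AS K q n = Finset.val ''
      {S : Finset K | S.card = n ∧ (0 : K) ∉ S ∧ S.image (fun x => x ^ q) = S} := by
    ext T
    constructor
    · rintro ⟨⟨hc, h0, hst⟩, hnd⟩
      refine ⟨⟨T, hnd⟩, ⟨hc, h0, ?_⟩, rfl⟩
      apply Finset.val_injective
      rw [Finset.image_val]
      show (Multiset.map _ T).dedup = T
      rw [hst]
      exact Multiset.dedup_eq_self.mpr hnd
    · rintro ⟨S, ⟨hc, h0, hst⟩, rfl⟩
      refine ⟨⟨hc, fun h => h0 h, ?_⟩, S.nodup⟩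
      have hval := congrArg Finset.val hst
      rw [Finset.image_val] at hval
      have hndm : (Multiset.map (fun x => x ^ q) S.val).Nodup :=
        S.nodup.map (fun x y hxy => hbijσ.1 hxy)
      rw [Multiset.dedup_eq_self.mpr hndm] at hval
      exact hval
  set aZ : ℕ → ℤ := fun k => ((AS K q k).ncard : ℤ) with haZ
  set mZ : ℕ → ℤ := fun k => ((MS K q k).ncard : ℤ) with hmZ
  have hm0 : mZ 0 = 1 := by simp [hmZ, MS_zero]
  have ha0 : aZ 0 = 1 := by simp [haZ, AS_zero]
  have hmk : ∀ k, mZ (k + 1) = ((q : ℤ) - 1) * (q : ℤ) ^ k := by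
    intro k
    have hc := (MS_card (K := K) hF hfix φ hφ (n := k + 1) (by omega)).2
    simp only [hmZ, hc, Nat.add_sub_cancel]
    rw [Nat.cast_mul, Nat.cast_pow, Nat.cast_sub (by omega : 1 ≤ q), Nat.cast_one]
  have hconv : ∀ N, mZ N = ∑ k ∈ Finset.range (N / 2 + 1), aZ (N - 2 * k) * mZ k := by
    intro N
    have hc := conv (K := K) hF hfix φ hφ hbijσ N
    simp only [hmZ, haZ, hc]
    push_cast
    rfl
  have hmain := arith q hq1 aZ mZ hm0 ha0 hmk hconv n hn
  have hca : {S : Finset K | S.card = n ∧ (0 : K) ∉ S ∧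
      S.image (fun x => x ^ q) = S}.ncard = (AS K q n).ncard := by
    rw [hsetimg, Set.ncard_image_of_injOn Finset.val_injective.injOn]
  rw [hca]
  exact hmain
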